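/- Let c_i(n,k) be the number of signed permutations π ∈ B_n with exc_A(π) = k and neg(π) = i. Then c_i(n,k) = (n−k)·c_i(n−1,k−1) + (k+1)·c_i(n−1,k) + (n−k)·c_{i−1}(n−1,k) + (k+1)·c_{i−1}(n−1,k+1), where c_{−1}(n,k) = 0 and c_i(0,k) = 0. -/

import Mathlib

open Finset Polynomial

/-- The group of colored permutations `G_{r,n} = Z_r ≀ S_n`, realized as bijections of the
colored alphabet `Σ = [n] × {0,…,r-1}` commuting with the color shift. -/
def ColoredPerm (r n : ℕ) [NeZero r] : Type :=
  {π : Equiv.Perm (Fin n × Fin r) //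
    ∀ x : Fin n × Fin r, π (x.1, x.2 + 1) = ((π x).1, (π x).2 + 1)}

/-- The color order on the colored alphabet:
`1^[r-1] < ⋯ < n^[r-1] < ⋯ < 1^[0] < ⋯ < n^[0]` (higher color is smaller). -/
def colorLt {r n : ℕ} (x y : Fin n × Fin r) : Prop :=
  y.2 < x.2 ∨ (x.2 = y.2 ∧ x.1 < y.1)

/-- The excedance number `exc` of a colored permutation. -/
noncomputable def cExc {r n : ℕ} [NeZero r] (π : ColoredPerm r n) : ℕ :=
  Nat.card {x : Fin n × Fin r // colorLt x (π.1 x)}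

/-- `exc_A(π) = |{i ∈ [n-1] : π(i) > i}|` (positions are the color-0 letters,
and `i ∈ [n-1]` corresponds to `i.val + 1 < n`). -/
noncomputable def cExcA {r n : ℕ} [NeZero r] (π : ColoredPerm r n) : ℕ :=
  Nat.card {i : Fin n // i.val + 1 < n ∧ colorLt (i, 0) (π.1 (i, 0))}

/-- `csum(π)`: the sum of the colors appearing in the window notation of `π`. -/
def csum {r n : ℕ} [NeZero r] (π : ColoredPerm r n) : ℕ :=
  ∑ i : Fin n, (π.1 (i, 0)).2.val

/-- `c_i(n,k)`: the number of signed permutations `π ∈ B_n` with `exc_A(π) = k` and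
`neg(π) = i`.  Indices `i, k` range over `ℤ`, so that `c_{-1}(n,k) = 0` and the counts
vanish for negative indices. -/
noncomputable def cB (n : ℕ) (i k : ℤ) : ℕ :=
  Nat.card {π : ColoredPerm 2 n // (cExcA π : ℤ) = k ∧ (csum π : ℤ) = i}

section AuxCB
open Equiv

-- concrete model
abbrev SP (m : ℕ) := Equiv.Perm (Fin m) × (Fin m → Fin 2)

def Efun {m : ℕ} (p : SP m) : ℕ := (univ.filter fun i => p.2 i = 0 ∧ i < p.1 i).card
def Nfun {m : ℕ} (p : SP m) : ℕ := ∑ i, (p.2 i).val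

noncomputable def D (m : ℕ) (i k : ℤ) : ℕ :=
  (univ.filter fun p : SP m => (Efun p : ℤ) = k ∧ (Nfun p : ℤ) = i).card

def ψ {n : ℕ} (q : SP n) : ColoredPerm 2 n :=
  ⟨{ toFun := fun x => (q.1 x.1, x.2 + q.2 x.1)
     invFun := fun y => (q.1.symm y.1, y.2 - q.2 (q.1.symm y.1))
     left_inv := by intro x; simp
     right_inv := by intro y; simp },
   by intro x; simp [add_right_comm]⟩

lemma ψ_bij {n : ℕ} : Function.Bijective (ψ (n := n)) := by
  constructor
  · rintro ⟨u, s⟩ ⟨u', s'⟩ h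
    have h' := congrArg Subtype.val h
    have hx : ∀ i : Fin n, (u i, (0 : Fin 2) + s i) = (u' i, (0:Fin 2) + s' i) := by
      intro i
      exact congrFun (congrArg Equiv.toFun h') (i, 0)
    have hu : u = u' := by
      ext i
      exact congrArg (fun z => (Prod.fst z : Fin n).val) (hx i)
    have hs : s = s' := by
      funext i
      have := congrArg Prod.snd (hx i)
      simpa using this
    rw [Prod.ext_iff]; exact ⟨hu, hs⟩
  · rintro ⟨π, hπ⟩
    -- π (i,c) = ((π (i,0)).1, (π (i,0)).2 + c)
    have key : ∀ (i : Fin n) (c : Fin 2), π (i, c) = ((π (i,0)).1, (π (i,0)).2 + c) := by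
      intro i c
      fin_cases c
      · simp
      · have := hπ (i, 0)
        simpa using this
    refine ⟨⟨⟨fun i => (π (i,0)).1, fun v => (π.symm (v,0)).1, ?_, ?_⟩, fun i => (π (i,0)).2⟩, ?_⟩
    · intro i
      have : π (i, -(π (i,0)).2) = ((π (i,0)).1, 0) := by
        rw [key i]; simp
      have := congrArg (fun z => (π.symm z).1) this
      simpa using this.symm
    · intro v
      have h1 : π (π.symm (v, 0)) = (v, 0) := π.apply_symm_apply _
      have h2 := key (π.symm (v,0)).1 (π.symm (v,0)).2
      rw [Prod.mk.eta] at h2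
      rw [h1] at h2
      exact (congrArg Prod.fst h2).symm
    · apply Subtype.ext
      apply Equiv.ext
      rintro ⟨i, c⟩
      have := key i c
      simp only [ψ, Equiv.coe_fn_mk]
      rw [this, add_comm]

lemma csum_ψ {n : ℕ} (q : SP n) : csum (ψ q) = Nfun q := by
  simp [csum, ψ, Nfun]

lemma cExcA_ψ {n : ℕ} (q : SP n) : cExcA (ψ q) = Efun q := by
  have hcond : ∀ i : Fin n,
      (i.val + 1 < n ∧ colorLt (i, 0) ((ψ q).1 (i, 0))) ↔ (q.2 i = 0 ∧ i < q.1 i) := by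
    intro i
    simp only [ψ, Equiv.coe_fn_mk, colorLt, zero_add]
    constructor
    · rintro ⟨-, h | h⟩
      · exact absurd h (by simp [Fin.lt_def, Fin.le_zero_iff])
      · exact ⟨h.1.symm, h.2⟩
    · rintro ⟨h0, hlt⟩
      refine ⟨?_, Or.inr ⟨h0.symm, hlt⟩⟩
      have h1 : i.val + 1 ≤ (q.1 i).val := hlt
      exact lt_of_le_of_lt h1 (q.1 i).isLt
  classical
  rw [cExcA]
  rw [Nat.card_eq_fintype_card]
  rw [Fintype.card_subtype]
  rw [Efun]
  congr 1
  apply Finset.filter_congr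
  intro i _
  simpa using hcond i

lemma cB_eq_D (n : ℕ) (i k : ℤ) : cB n i k = D n i k := by
  rw [cB, D]
  rw [Nat.card_congr ((Equiv.ofBijective ψ ψ_bij).subtypeEquiv
    (fun q => Iff.rfl : ∀ q : SP n,
      ((cExcA (ψ q) : ℤ) = k ∧ (csum (ψ q) : ℤ) = i) ↔
      ((cExcA ((Equiv.ofBijective ψ ψ_bij) q) : ℤ) = k ∧
        (csum ((Equiv.ofBijective ψ ψ_bij) q) : ℤ) = i))).symm]
  rw [Nat.card_eq_fintype_card, Fintype.card_subtype]
  congr 1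
  apply Finset.filter_congr
  intro q _
  rw [cExcA_ψ, csum_ψ]

def liftLast {m : ℕ} (σ : Perm (Fin m)) : Perm (Fin (m+1)) :=
  (finSuccEquivLast.symm).permCongr (Equiv.optionCongr σ)

@[simp] lemma liftLast_castSucc {m : ℕ} (σ : Perm (Fin m)) (i : Fin m) :
    liftLast σ (Fin.castSucc i) = Fin.castSucc (σ i) := by
  simp [liftLast, Equiv.permCongr_apply]

@[simp] lemma liftLast_last {m : ℕ} (σ : Perm (Fin m)) :
    liftLast σ (Fin.last m) = Fin.last m := by
  simp [liftLast, Equiv.permCongr_apply]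

def Φ {m : ℕ} (q : SP m × (Fin (m+1) × Fin 2)) : SP (m+1) :=
  (liftLast q.1.1 * Equiv.swap q.2.1 (Fin.last m),
   Fin.snoc q.1.2 q.2.2 ∘ (Equiv.swap q.2.1 (Fin.last m)))

lemma Φ_bij {m : ℕ} : Function.Bijective (Φ (m := m)) := by
  rw [Fintype.bijective_iff_injective_and_card]
  constructor
  · rintro ⟨⟨σ, s⟩, ⟨j, ε⟩⟩ ⟨⟨σ', s'⟩, ⟨j', ε'⟩⟩ h
    obtain ⟨hu, ht⟩ := Prod.mk.injEq .. ▸ h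
    have key : ∀ (τ : Perm (Fin m)) (a : Fin (m+1)),
        (liftLast τ * Equiv.swap a (Fin.last m)).symm (Fin.last m) = a := by
      intro τ a
      rw [Equiv.symm_apply_eq]
      simp [Equiv.Perm.mul_apply]
    have hj : j = j' := by
      have h1 := congrArg (fun u : Perm (Fin (m+1)) => u.symm (Fin.last m)) hu
      simpa [key] using h1
    subst hj
    have hσ : σ = σ' := by
      have h2 : liftLast σ = liftLast σ' := mul_right_cancel hu
      ext i
      have := congrArg (fun u : Perm (Fin (m+1)) => (u (Fin.castSucc i)).val) h2
      simpa using this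
    have hse : Fin.snoc s ε = (Fin.snoc s' ε' : Fin (m+1) → Fin 2) := by
      funext x
      have := congrFun ht (Equiv.swap j (Fin.last m) x)
      simpa using this
    have hs : s = s' := by
      funext i
      have := congrFun hse (Fin.castSucc i)
      simpa using this
    have hε : ε = ε' := by
      have := congrFun hse (Fin.last m)
      simpa using this
    simp [hσ, hs, hε]
  · simp [Fintype.card_perm, Nat.factorial_succ]
    ring

lemma Nfun_Φ {m : ℕ} (σ : Perm (Fin m)) (s : Fin m → Fin 2) (j : Fin (m+1)) (ε : Fin 2) :
    Nfun (Φ ((σ, s), (j, ε))) = Nfun (σ, s) + ε.val := by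
  unfold Nfun Φ
  simp only [Function.comp]
  rw [Equiv.sum_comp (Equiv.swap j (Fin.last m))
    (fun x => ((Fin.snoc s ε : Fin (m+1) → Fin 2) x).val)]
  rw [Fin.sum_univ_castSucc]
  simp

lemma Efun_Φ {m : ℕ} (σ : Perm (Fin m)) (s : Fin m → Fin 2) (j : Fin (m+1)) (ε : Fin 2) :
    Efun (Φ ((σ, s), (j, ε)))
      + (if (∃ i : Fin m, Fin.castSucc i = j ∧ s i = 0 ∧ i < σ i) then 1 else 0)
    = Efun (σ, s) + (if (ε = 0 ∧ j ≠ Fin.last m) then 1 else 0) := by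
  classical
  set w := Equiv.swap j (Fin.last m) with hw
  have h1 : Efun (Φ ((σ, s), (j, ε))) =
      ∑ x : Fin (m+1), (fun y => if ((Fin.snoc s ε : Fin (m+1) → Fin 2) y = 0
        ∧ w y < liftLast σ y) then 1 else 0) (w x) := by
    rw [Efun, Finset.card_filter]
    apply Finset.sum_congr rfl
    intro x _
    simp only [Φ, Function.comp, Equiv.Perm.mul_apply, hw, Equiv.swap_apply_self]
    exact if_congr Iff.rfl rfl rfl
  rw [h1, Equiv.sum_comp w (fun y => if ((Fin.snoc s ε : Fin (m+1) → Fin 2) y = 0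
        ∧ w y < liftLast σ y) then 1 else 0), Fin.sum_univ_castSucc]
  have hlast : (if ((Fin.snoc s ε : Fin (m+1) → Fin 2) (Fin.last m) = 0
      ∧ w (Fin.last m) < liftLast σ (Fin.last m)) then 1 else 0)
      = (if (ε = 0 ∧ j ≠ Fin.last m) then 1 else 0) := by
    rw [hw]
    simp only [Fin.snoc_last, Equiv.swap_apply_right, liftLast_last]
    congr 1
    simp only [eq_iff_iff]
    constructor
    · rintro ⟨h, hlt⟩; exact ⟨h, ne_of_lt hlt⟩
    · rintro ⟨h, hne⟩; exact ⟨h, lt_of_le_of_ne (Fin.le_last j) hne⟩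
  rw [hlast]
  have hcast : ∀ i : Fin m, (if ((Fin.snoc s ε : Fin (m+1) → Fin 2) (Fin.castSucc i) = 0
      ∧ w (Fin.castSucc i) < liftLast σ (Fin.castSucc i)) then 1 else 0)
      = (if Fin.castSucc i = j then 0 else (if (s i = 0 ∧ i < σ i) then 1 else 0)) := by
    intro i
    simp only [Fin.snoc_castSucc, liftLast_castSucc]
    by_cases hij : Fin.castSucc i = j
    · rw [if_pos hij, hw, hij, Equiv.swap_apply_left]
      rw [if_neg]
      rintro ⟨-, hlt⟩
      exact absurd (Fin.le_last _) (not_le_of_gt hlt)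
    · rw [if_neg hij, hw, Equiv.swap_apply_of_ne_of_ne hij (Fin.ne_last_of_lt (Fin.castSucc_lt_last i))]
      simp [Fin.castSucc_lt_castSucc_iff]
  rw [Finset.sum_congr rfl (fun i _ => hcast i)]
  have hE : Efun (σ, s) = ∑ i : Fin m, (if (s i = 0 ∧ i < σ i) then 1 else 0) := by
    rw [Efun, Finset.card_filter]
  rw [hE]
  by_cases hj : j = Fin.last m
  · subst hj
    have hne : ∀ i : Fin m, Fin.castSucc i ≠ Fin.last m :=
      fun i => Fin.ne_last_of_lt (Fin.castSucc_lt_last i)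
    have hex : (if (∃ i : Fin m, Fin.castSucc i = Fin.last m ∧ s i = 0 ∧ i < σ i)
        then 1 else 0) = 0 :=
      if_neg (by rintro ⟨i, hi, -⟩; exact hne i hi)
    rw [hex, Finset.sum_congr rfl (fun i (_ : i ∈ univ) => if_neg (hne i)), add_zero]
  · obtain ⟨j0, rfl⟩ := Fin.exists_castSucc_eq.mpr hj
    simp only [show (∃ i : Fin m, Fin.castSucc i = Fin.castSucc j0 ∧ s i = 0 ∧ i < σ i)
        ↔ (s j0 = 0 ∧ j0 < σ j0) from
      ⟨by rintro ⟨i, hi, h⟩; rwa [Fin.castSucc_inj.mp hi] at h, fun h => ⟨j0, rfl, h⟩⟩]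
    have h2 : ∑ i : Fin m, (if Fin.castSucc i = Fin.castSucc j0 then 0
        else (if (s i = 0 ∧ i < σ i) then 1 else 0))
        = ∑ i ∈ univ.erase j0, (if (s i = 0 ∧ i < σ i) then 1 else 0) := by
      rw [← Finset.sum_erase_add _ _ (mem_univ j0), if_pos rfl, add_zero]
      exact Finset.sum_congr rfl fun i hi =>
        if_neg (fun hcc => (Finset.ne_of_mem_erase hi) (Fin.castSucc_inj.mp hcc))
    rw [h2, add_right_comm,
      Finset.sum_erase_add univ (fun i => if (s i = 0 ∧ i < σ i) then 1 else 0) (mem_univ j0)]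

lemma sum_j {m : ℕ} (C : Fin m → Prop) [DecidablePred C] (X Y : ℤ) :
    ∑ j' : Fin m, (if C j' then X else Y)
      = ((univ.filter C).card : ℤ) * X + ((m : ℤ) - (univ.filter C).card) * Y := by
  rw [Finset.sum_ite, Finset.sum_const, Finset.sum_const, nsmul_eq_mul, nsmul_eq_mul]
  have h1 := Finset.card_filter_add_card_filter_not (s := (univ : Finset (Fin m))) (p := C)
  rw [Finset.card_univ, Fintype.card_fin] at h1
  have h2 : (((univ : Finset (Fin m)).filter fun a => ¬ C a).card : ℤ)
      = (m : ℤ) - ((univ.filter C).card : ℤ) := by omega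
  rw [h2]


lemma inner_count {m : ℕ} (σ : Perm (Fin m)) (s : Fin m → Fin 2) (i k : ℤ) :
    ∑ jε : Fin (m+1) × Fin 2,
        (if ((Efun (Φ ((σ,s), jε)) : ℤ) = k ∧ (Nfun (Φ ((σ,s), jε)) : ℤ) = i)
          then (1:ℤ) else 0)
    = (if ((Efun (σ,s) : ℤ) = k ∧ (Nfun (σ,s) : ℤ) = i) then k+1 else 0)
      + (if ((Efun (σ,s) : ℤ) = k-1 ∧ (Nfun (σ,s) : ℤ) = i) then (m:ℤ)+1-k else 0)
      + (if ((Efun (σ,s) : ℤ) = k+1 ∧ (Nfun (σ,s) : ℤ) = i-1) then k+1 else 0)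
      + (if ((Efun (σ,s) : ℤ) = k ∧ (Nfun (σ,s) : ℤ) = i-1) then (m:ℤ)+1-k else 0) := by
  classical
  have hE : ∀ (j : Fin (m+1)) (ε : Fin 2), (Efun (Φ ((σ,s),(j,ε))) : ℤ)
      = (Efun (σ,s) : ℤ)
        + (if (ε = 0 ∧ j ≠ Fin.last m) then 1 else 0)
        - (if (∃ i0 : Fin m, Fin.castSucc i0 = j ∧ s i0 = 0 ∧ i0 < σ i0) then 1 else 0) := by
    intro j ε
    have h := congrArg (Nat.cast : ℕ → ℤ) (Efun_Φ σ s j ε)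
    push_cast at h
    linarith
  have hN : ∀ (j : Fin (m+1)) (ε : Fin 2), (Nfun (Φ ((σ,s),(j,ε))) : ℤ)
      = (Nfun (σ,s) : ℤ) + (ε.val : ℤ) := by
    intro j ε
    have h := congrArg (Nat.cast : ℕ → ℤ) (Nfun_Φ σ s j ε)
    push_cast at h
    linarith
  have hv0 : (((0:Fin 2)).val : ℤ) = 0 := rfl
  have hv1 : (((1:Fin 2)).val : ℤ) = 1 := rfl
  rw [Fintype.sum_prod_type_right]
  rw [Fin.sum_univ_two]
  have hex : ∀ j' : Fin m, (∃ i0 : Fin m, Fin.castSucc i0 = Fin.castSucc j' ∧ s i0 = 0 ∧ i0 < σ i0)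
      ↔ (s j' = 0 ∧ j' < σ j') :=
    fun j' => ⟨by rintro ⟨i0, hi, h⟩; rwa [Fin.castSucc_inj.mp hi] at h, fun h => ⟨j', rfl, h⟩⟩
  have hexlast : ¬ (∃ i0 : Fin m, Fin.castSucc i0 = Fin.last m ∧ s i0 = 0 ∧ i0 < σ i0) := by
    rintro ⟨i0, hi, -⟩
    exact Fin.ne_last_of_lt (Fin.castSucc_lt_last i0) hi
  have hcard : ((univ.filter fun j' : Fin m => s j' = 0 ∧ j' < σ j').card : ℤ)
      = (Efun (σ,s) : ℤ) := rfl
  have hsum0 : ∑ j : Fin (m+1),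
      (if ((Efun (Φ ((σ,s),(j,0))) : ℤ) = k ∧ (Nfun (Φ ((σ,s),(j,0))) : ℤ) = i)
        then (1:ℤ) else 0)
      = ((Efun (σ,s) : ℤ) + 1)
          * (if ((Efun (σ,s) : ℤ) = k ∧ (Nfun (σ,s) : ℤ) = i) then 1 else 0)
        + ((m : ℤ) - (Efun (σ,s) : ℤ))
          * (if ((Efun (σ,s) : ℤ) = k-1 ∧ (Nfun (σ,s) : ℤ) = i) then 1 else 0) := by
    rw [Fin.sum_univ_castSucc]
    have hptw : ∀ j' : Fin m,
        (if ((Efun (Φ ((σ,s),(Fin.castSucc j',0))) : ℤ) = k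
            ∧ (Nfun (Φ ((σ,s),(Fin.castSucc j',0))) : ℤ) = i) then (1:ℤ) else 0)
        = (if (s j' = 0 ∧ j' < σ j')
            then (if ((Efun (σ,s) : ℤ) = k ∧ (Nfun (σ,s) : ℤ) = i) then (1:ℤ) else 0)
            else (if ((Efun (σ,s) : ℤ) = k-1 ∧ (Nfun (σ,s) : ℤ) = i) then (1:ℤ) else 0)) := by
      intro j'
      by_cases hc : s j' = 0 ∧ j' < σ j'
      · rw [if_pos hc]
        apply if_congr _ rfl rfl
        rw [hE, hN, hv0, if_pos ((hex j').mpr hc),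
          if_pos (⟨rfl, Fin.ne_last_of_lt (Fin.castSucc_lt_last j')⟩ :
            (0:Fin 2) = 0 ∧ Fin.castSucc j' ≠ Fin.last m)]
        constructor
        · rintro ⟨h1, h2⟩; exact ⟨by omega, by omega⟩
        · rintro ⟨h1, h2⟩; exact ⟨by omega, by omega⟩
      · rw [if_neg hc]
        apply if_congr _ rfl rfl
        rw [hE, hN, hv0, if_neg (fun hh => hc ((hex j').mp hh)),
          if_pos (⟨rfl, Fin.ne_last_of_lt (Fin.castSucc_lt_last j')⟩ :
            (0:Fin 2) = 0 ∧ Fin.castSucc j' ≠ Fin.last m)]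
        constructor
        · rintro ⟨h1, h2⟩; exact ⟨by omega, by omega⟩
        · rintro ⟨h1, h2⟩; exact ⟨by omega, by omega⟩
    rw [Finset.sum_congr rfl (fun j' _ => hptw j')]
    rw [sum_j]
    have hlast : (if ((Efun (Φ ((σ,s),(Fin.last m,0))) : ℤ) = k
        ∧ (Nfun (Φ ((σ,s),(Fin.last m,0))) : ℤ) = i) then (1:ℤ) else 0)
        = (if ((Efun (σ,s) : ℤ) = k ∧ (Nfun (σ,s) : ℤ) = i) then (1:ℤ) else 0) := by
      apply if_congr _ rfl rfl
      rw [hE, hN, hv0, if_neg hexlast, if_neg (by rintro ⟨-, hh⟩; exact hh rfl :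
        ¬ ((0:Fin 2) = 0 ∧ Fin.last m ≠ Fin.last m))]
      constructor
      · rintro ⟨h1, h2⟩; exact ⟨by omega, by omega⟩
      · rintro ⟨h1, h2⟩; exact ⟨by omega, by omega⟩
    rw [hlast, hcard]
    ring
  have hsum1 : ∑ j : Fin (m+1),
      (if ((Efun (Φ ((σ,s),(j,1))) : ℤ) = k ∧ (Nfun (Φ ((σ,s),(j,1))) : ℤ) = i)
        then (1:ℤ) else 0)
      = (Efun (σ,s) : ℤ)
          * (if ((Efun (σ,s) : ℤ) = k+1 ∧ (Nfun (σ,s) : ℤ) = i-1) then 1 else 0)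
        + ((m : ℤ) - (Efun (σ,s) : ℤ) + 1)
          * (if ((Efun (σ,s) : ℤ) = k ∧ (Nfun (σ,s) : ℤ) = i-1) then 1 else 0) := by
    rw [Fin.sum_univ_castSucc]
    have h10 : ¬ ((1:Fin 2) = 0) := by decide
    have hptw : ∀ j' : Fin m,
        (if ((Efun (Φ ((σ,s),(Fin.castSucc j',1))) : ℤ) = k
            ∧ (Nfun (Φ ((σ,s),(Fin.castSucc j',1))) : ℤ) = i) then (1:ℤ) else 0)
        = (if (s j' = 0 ∧ j' < σ j')
            then (if ((Efun (σ,s) : ℤ) = k+1 ∧ (Nfun (σ,s) : ℤ) = i-1) then (1:ℤ) else 0)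
            else (if ((Efun (σ,s) : ℤ) = k ∧ (Nfun (σ,s) : ℤ) = i-1) then (1:ℤ) else 0)) := by
      intro j'
      by_cases hc : s j' = 0 ∧ j' < σ j'
      · rw [if_pos hc]
        apply if_congr _ rfl rfl
        rw [hE, hN, hv1, if_pos ((hex j').mpr hc),
          if_neg (by rintro ⟨hh, -⟩; exact h10 hh :
            ¬ ((1:Fin 2) = 0 ∧ Fin.castSucc j' ≠ Fin.last m))]
        constructor
        · rintro ⟨h1, h2⟩; exact ⟨by omega, by omega⟩
        · rintro ⟨h1, h2⟩; exact ⟨by omega, by omega⟩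
      · rw [if_neg hc]
        apply if_congr _ rfl rfl
        rw [hE, hN, hv1, if_neg (fun hh => hc ((hex j').mp hh)),
          if_neg (by rintro ⟨hh, -⟩; exact h10 hh :
            ¬ ((1:Fin 2) = 0 ∧ Fin.castSucc j' ≠ Fin.last m))]
        constructor
        · rintro ⟨h1, h2⟩; exact ⟨by omega, by omega⟩
        · rintro ⟨h1, h2⟩; exact ⟨by omega, by omega⟩
    rw [Finset.sum_congr rfl (fun j' _ => hptw j')]
    rw [sum_j]
    have hlast : (if ((Efun (Φ ((σ,s),(Fin.last m,1))) : ℤ) = k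
        ∧ (Nfun (Φ ((σ,s),(Fin.last m,1))) : ℤ) = i) then (1:ℤ) else 0)
        = (if ((Efun (σ,s) : ℤ) = k ∧ (Nfun (σ,s) : ℤ) = i-1) then (1:ℤ) else 0) := by
      apply if_congr _ rfl rfl
      rw [hE, hN, hv1, if_neg hexlast, if_neg (by rintro ⟨hh, -⟩; exact h10 hh :
        ¬ ((1:Fin 2) = 0 ∧ Fin.last m ≠ Fin.last m))]
      constructor
      · rintro ⟨h1, h2⟩; exact ⟨by omega, by omega⟩
      · rintro ⟨h1, h2⟩; exact ⟨by omega, by omega⟩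
    rw [hlast, hcard]
    ring
  rw [hsum0, hsum1]
  split_ifs <;> omega

lemma sum_indicator_D {m : ℕ} (k' i' : ℤ) (c : ℤ) :
    ∑ p : SP m, (if ((Efun p : ℤ) = k' ∧ (Nfun p : ℤ) = i') then c else 0)
      = (D m i' k' : ℤ) * c := by
  rw [D, ← Finset.sum_filter, Finset.sum_const, nsmul_eq_mul]

lemma D_rec (m : ℕ) (i k : ℤ) :
    (D (m+1) i k : ℤ) = ((m:ℤ)+1-k) * D m i (k-1) + (k+1) * D m i k
      + ((m:ℤ)+1-k) * D m (i-1) k + (k+1) * D m (i-1) (k+1) := by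
  have h1 : (D (m+1) i k) = (univ.filter fun q : SP m × (Fin (m+1) × Fin 2) =>
      (Efun (Φ q) : ℤ) = k ∧ (Nfun (Φ q) : ℤ) = i).card := by
    rw [D]
    refine (Finset.card_bij' (fun q (_ : q ∈ _) => Φ q)
      (fun p _ => (Equiv.ofBijective Φ Φ_bij).symm p) ?_ ?_ ?_ ?_).symm
    · intro q hq
      simp only [Finset.mem_filter, Finset.mem_univ, true_and] at hq ⊢
      exact hq
    · intro p hp
      simp only [Finset.mem_filter, Finset.mem_univ, true_and] at hp ⊢
      have : Φ ((Equiv.ofBijective Φ Φ_bij).symm p) = p :=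
        (Equiv.ofBijective Φ Φ_bij).apply_symm_apply p
      rw [this]
      exact hp
    · intro q _
      exact (Equiv.ofBijective Φ Φ_bij).symm_apply_apply q
    · intro p _
      exact (Equiv.ofBijective Φ Φ_bij).apply_symm_apply p
  have h2 : (D (m+1) i k : ℤ) = ∑ q : SP m × (Fin (m+1) × Fin 2),
      (if ((Efun (Φ q) : ℤ) = k ∧ (Nfun (Φ q) : ℤ) = i) then (1:ℤ) else 0) := by
    rw [h1, Finset.card_filter]
    push_cast
    rfl
  rw [h2, Fintype.sum_prod_type]
  rw [Finset.sum_congr rfl (fun p (_ : p ∈ univ) => inner_count p.1 p.2 i k)]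
  rw [Finset.sum_add_distrib, Finset.sum_add_distrib, Finset.sum_add_distrib]
  have e1 : ∑ p : SP m, (if ((Efun p : ℤ) = k ∧ (Nfun p : ℤ) = i) then k+1 else 0)
      = (D m i k : ℤ) * (k+1) := sum_indicator_D k i (k+1)
  have e2 : ∑ p : SP m, (if ((Efun p : ℤ) = k-1 ∧ (Nfun p : ℤ) = i) then (m:ℤ)+1-k else 0)
      = (D m i (k-1) : ℤ) * ((m:ℤ)+1-k) := sum_indicator_D (k-1) i _
  have e3 : ∑ p : SP m, (if ((Efun p : ℤ) = k+1 ∧ (Nfun p : ℤ) = i-1) then k+1 else 0)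
      = (D m (i-1) (k+1) : ℤ) * (k+1) := sum_indicator_D (k+1) (i-1) _
  have e4 : ∑ p : SP m, (if ((Efun p : ℤ) = k ∧ (Nfun p : ℤ) = i-1) then (m:ℤ)+1-k else 0)
      = (D m (i-1) k : ℤ) * ((m:ℤ)+1-k) := sum_indicator_D k (i-1) _
  rw [e1, e2, e3, e4]
  ring

end AuxCB

/-- The recursion
`c_i(n,k) = (n−k)·c_i(n−1,k−1) + (k+1)·c_i(n−1,k) + (n−k)·c_{i−1}(n−1,k) + (k+1)·c_{i−1}(n−1,k+1)`. -/
theorem cB_recursion (n : ℕ) (hn : 1 ≤ n) (i k : ℤ) :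
    (cB n i k : ℤ) =
      ((n : ℤ) - k) * cB (n - 1) i (k - 1) + (k + 1) * cB (n - 1) i k +
        ((n : ℤ) - k) * cB (n - 1) (i - 1) k + (k + 1) * cB (n - 1) (i - 1) (k + 1) := by
  obtain ⟨m, rfl⟩ : ∃ m, n = m + 1 := ⟨n - 1, (Nat.succ_pred_eq_of_pos hn).symm⟩
  rw [cB_eq_D, cB_eq_D, cB_eq_D, cB_eq_D, cB_eq_D]
  simp only [Nat.add_sub_cancel]
  rw [D_rec]
  push_cast
  ring
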